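/- For 0 ≤ τ ≤ min{n, m}, the cardinality of the ball of rank radius τ in F_{q^m}^n satisfies q^{τ(m+n−τ)} ≤ |B_τ| < K_q^{-1} · q^{τ(m+n−τ)}, where K_q = Π_{j=1}^{∞} (1 − q^{-j}). -/

import Mathlib

/-- The `F_q`-rank of a vector `a ∈ F_{q^m}^n` with respect to a fixed basis `β`. -/
noncomputable def rankq (Fq F : Type*) [Field Fq] [Field F] [Algebra Fq F]
    {m n : ℕ} (β : Module.Basis (Fin m) Fq F) (a : Fin n → F) : ℕ :=
  (Matrix.of fun (i : Fin m) (j : Fin n) => β.repr (a j) i).rank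

open Module


lemma exists_superspace {K V : Type*} [Field K] [AddCommGroup V] [Module K V]
    [FiniteDimensional K V] {τ : ℕ} (hτ : τ ≤ finrank K V) :
    ∀ (k : ℕ) (W : Submodule K V), finrank K W + k = τ → ∃ W', W ≤ W' ∧ finrank K W' = τ := by
  intro k
  induction k with
  | zero => exact fun W hW => ⟨W, le_rfl, by omega⟩
  | succ k ih =>
    intro W hW
    have hlt : finrank K W < finrank K V := by omega
    obtain ⟨x, hx⟩ := W.exists_of_finrank_lt hlt
    have hxW : x ∉ W := by simpa using hx 1 one_ne_zero
    have hxne : x ≠ 0 := fun h => hxW (h ▸ W.zero_mem)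
    have hWlt : W < W ⊔ K ∙ x := by
      refine lt_of_le_of_ne le_sup_left fun h => hxW ?_
      have : x ∈ W ⊔ K ∙ x := Submodule.mem_sup_right (Submodule.mem_span_singleton_self x)
      rwa [← h] at this
    have h1 : finrank K ↥(W ⊔ K ∙ x) ≤ finrank K W + 1 := by
      have := Submodule.finrank_sup_add_finrank_inf_eq W (K ∙ x)
      rw [finrank_span_singleton hxne] at this
      omega
    have h2 : finrank K W < finrank K ↥(W ⊔ K ∙ x) := Submodule.finrank_lt_finrank_of_lt hWlt
    obtain ⟨W', hle, hfr⟩ := ih (W ⊔ K ∙ x) (by omega)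
    exact ⟨W', le_sup_left.trans hle, hfr⟩

lemma exists_factorization {Fq : Type*} [Field Fq] {m k τ : ℕ} (hτm : τ ≤ m)
    (M : Matrix (Fin m) (Fin k) Fq) (hM : M.rank ≤ τ) :
    ∃ (X : Matrix (Fin m) (Fin τ) Fq) (Y : Matrix (Fin τ) (Fin k) Fq),
      Function.Injective X.mulVecLin ∧ M = X * Y := by
  have hrank : finrank Fq (LinearMap.range M.mulVecLin) = M.rank := rfl
  obtain ⟨W, hRW, hW⟩ := exists_superspace (K := Fq) (V := Fin m → Fq) (τ := τ)
      (by simpa using hτm) (τ - M.rank) (LinearMap.range M.mulVecLin) (by omega)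
  let b : Basis (Fin τ) Fq W := finBasisOfFinrankEq Fq W hW
  let L : (Fin τ → Fq) →ₗ[Fq] (Fin m → Fq) := W.subtype ∘ₗ (b.equivFun.symm : _ ≃ₗ[Fq] _)
  let C : (Fin k → Fq) →ₗ[Fq] W := LinearMap.codRestrict W M.mulVecLin
      (fun v => hRW (LinearMap.mem_range_self _ v))
  let G : (Fin k → Fq) →ₗ[Fq] (Fin τ → Fq) := (b.equivFun : _ →ₗ[Fq] _) ∘ₗ C
  have hLG : ∀ (f : (Fin k → Fq) →ₗ[Fq] (Fin m → Fq)), (LinearMap.toMatrix' f).mulVecLin = f := by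
    intro f; rw [← Matrix.toLin'_apply', Matrix.toLin'_toMatrix']
  have hL : (LinearMap.toMatrix' L).mulVecLin = L := by
    rw [← Matrix.toLin'_apply', Matrix.toLin'_toMatrix']
  have hG : (LinearMap.toMatrix' G).mulVecLin = G := by
    rw [← Matrix.toLin'_apply', Matrix.toLin'_toMatrix']
  refine ⟨LinearMap.toMatrix' L, LinearMap.toMatrix' G, ?_, ?_⟩
  · rw [hL]
    exact W.injective_subtype.comp b.equivFun.symm.injective
  · rw [← LinearMap.toMatrix'_comp]
    have hcomp : L ∘ₗ G = M.mulVecLin := by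
      apply LinearMap.ext; intro v
      show L (G v) = M.mulVecLin v
      simp only [L, G, C, LinearMap.coe_comp, Function.comp_apply, LinearEquiv.coe_coe,
        LinearEquiv.symm_apply_apply]
      rfl
    rw [hcomp, ← Matrix.toLin'_apply', LinearMap.toMatrix'_toLin']

lemma mul_left_cancel_of_inj {Fq : Type*} [Field Fq] {m τ : ℕ} {k : Type*} [Fintype k]
    (X : Matrix (Fin m) (Fin τ) Fq) (hX : Function.Injective X.mulVecLin)
    {Z₁ Z₂ : Matrix (Fin τ) k Fq} (h : X * Z₁ = X * Z₂) : Z₁ = Z₂ := by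
  ext j l
  have hcol : ∀ (Z : Matrix (Fin τ) k Fq) (l : k),
      (X * Z).transpose l = X.mulVecLin (fun j => Z j l) := by
    intro Z l
    ext i
    simp [Matrix.mul_apply, Matrix.mulVecLin_apply, Matrix.mulVec, dotProduct]
  have := hX (a₁ := fun j => Z₁ j l) (a₂ := fun j => Z₂ j l) (by rw [← hcol, ← hcol, h])
  exact congrFun this j

lemma ball_card_eq {Fq F : Type*} [Field Fq] [Fintype Fq] [Field F] [Fintype F] [Algebra Fq F]
    {m n τ : ℕ} (β : Basis (Fin m) Fq F) (a : Fin n → F) :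
    Nat.card {b : Fin n → F // rankq Fq F β (b - a) ≤ τ}
      = Nat.card {M : Matrix (Fin m) (Fin n) Fq // M.rank ≤ τ} := by
  refine Nat.card_congr ?_
  refine Equiv.subtypeEquiv ((Equiv.subRight a).trans
    ((Equiv.piCongrRight fun _ : Fin n => β.equivFun.toEquiv).trans
      ⟨fun v => Matrix.of fun i j => v j i, fun M j i => M i j, fun _ => rfl, fun _ => rfl⟩)) ?_
  intro b
  show rankq Fq F β (b - a) ≤ τ ↔ _
  unfold rankq
  simp only [Equiv.trans_apply, Equiv.subRight_apply, Equiv.piCongrRight_apply,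
    LinearEquiv.coe_toEquiv, Pi.map_apply, Basis.equivFun_apply, Equiv.coe_fn_mk]
  rfl

lemma lower_card {Fq : Type*} [Field Fq] [Fintype Fq] {m n τ : ℕ} (hτn : τ ≤ n) (hτm : τ ≤ m) :
    Fintype.card Fq ^ (τ * (m + n - τ)) ≤ Nat.card {M : Matrix (Fin m) (Fin n) Fq // M.rank ≤ τ} := by
  obtain ⟨d, rfl⟩ := Nat.exists_eq_add_of_le hτn
  have hA : ∀ A : Matrix (Fin m) (Fin τ) Fq, A.rank ≤ τ := fun A =>
    (A.rank_le_card_width).trans (by simp)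
  choose X Y hXinj hXY using fun A => exists_factorization (Fq := Fq) (k := τ) hτm A (hA A)
  let e : Fin (τ + d) ≃ (Fin τ) ⊕ (Fin d) := finSumFinEquiv.symm
  let J : (Matrix (Fin m) (Fin τ) Fq × Matrix (Fin τ) (Fin d) Fq) →
      {M : Matrix (Fin m) (Fin (τ + d)) Fq // M.rank ≤ τ} := fun p =>
    ⟨(X p.1 * Matrix.fromCols (Y p.1) p.2).submatrix id e, by
      rw [Matrix.submatrix_mul _ _ id id e Function.bijective_id, Matrix.submatrix_id_id]
      exact ((Matrix.rank_mul_le_left _ _).trans (Matrix.rank_le_card_width _)).trans (by simp)⟩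
  have hJ : Function.Injective J := by
    intro p p' h
    have h2 : X p.1 * Matrix.fromCols (Y p.1) p.2
        = X p'.1 * Matrix.fromCols (Y p'.1) p'.2 := by
      have := congrArg (fun M => Matrix.submatrix M id (e.symm : _ → _)) (Subtype.ext_iff.mp h)
      simpa [J, Matrix.submatrix_submatrix, Equiv.self_comp_symm] using this
    rw [Matrix.mul_fromCols, Matrix.mul_fromCols] at h2
    obtain ⟨h3, h4⟩ := (Matrix.fromCols_ext_iff _ _ _ _).mp h2
    rw [← hXY p.1, ← hXY p'.1] at h3
    have h5 : p.2 = p'.2 := by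
      apply mul_left_cancel_of_inj (X p.1) (hXinj p.1)
      rw [h4, h3]
    exact Prod.ext h3 h5
  have hcard := Nat.card_le_card_of_injective J hJ
  rw [Nat.card_eq_fintype_card, Fintype.card_prod] at hcard
  have hm1 : Fintype.card (Matrix (Fin m) (Fin τ) Fq) = Fintype.card Fq ^ (m * τ) := by
    rw [← Fintype.card_congr (Matrix.of : (Fin m → Fin τ → Fq) ≃ _),
      Fintype.card_fun, Fintype.card_fun]
    simp [← pow_mul, mul_comm]
  have hm2 : Fintype.card (Matrix (Fin τ) (Fin d) Fq) = Fintype.card Fq ^ (τ * d) := by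
    rw [← Fintype.card_congr (Matrix.of : (Fin τ → Fin d → Fq) ≃ _),
      Fintype.card_fun, Fintype.card_fun]
    simp [← pow_mul, mul_comm]
  rw [hm1, hm2, ← pow_add] at hcard
  have hexp : τ * (m + (τ + d) - τ) = m * τ + τ * d := by
    have : m + (τ + d) - τ = m + d := by omega
    rw [this]; ring
  rwa [hexp]


set_option maxHeartbeats 1600000 in
lemma upper_card {Fq : Type*} [Field Fq] [Fintype Fq] {m n τ : ℕ} (hτm : τ ≤ m) :
    Nat.card {M : Matrix (Fin m) (Fin n) Fq // M.rank ≤ τ}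
        * ∏ i : Fin τ, (Fintype.card Fq ^ τ - Fintype.card Fq ^ (i : ℕ))
      ≤ Fintype.card Fq ^ (τ * m) * Fintype.card Fq ^ (τ * n) := by
  classical
  set s : Finset (Matrix (Fin m) (Fin n) Fq) := Finset.univ.filter (fun M => M.rank ≤ τ) with hs
  set t : Finset (Matrix (Fin m) (Fin τ) Fq × Matrix (Fin τ) (Fin n) Fq) :=
    Finset.univ.filter (fun p => Function.Injective p.1.mulVecLin) with ht
  have habove : ∀ M ∈ s, Nat.card (GL (Fin τ) Fq)
      ≤ (t.bipartiteAbove (fun M p => p.1 * p.2 = M) M).card := by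
    intro M hM
    have hMr : M.rank ≤ τ := by simpa [hs] using hM
    obtain ⟨X, Y, hXinj, hXY⟩ := exists_factorization hτm M hMr
    set g : GL (Fin τ) Fq → Matrix (Fin m) (Fin τ) Fq × Matrix (Fin τ) (Fin n) Fq :=
      fun G => (X * (G : Matrix (Fin τ) (Fin τ) Fq),
        ((G⁻¹ : GL (Fin τ) Fq) : Matrix (Fin τ) (Fin τ) Fq) * Y) with hg
    have hmap : ∀ G : GL (Fin τ) Fq,
        g G ∈ t.bipartiteAbove (fun M p => p.1 * p.2 = M) M := by
      intro G
      rw [Finset.mem_bipartiteAbove]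
      constructor
      · rw [ht, Finset.mem_filter]
        refine ⟨Finset.mem_univ _, ?_⟩
        show Function.Injective (X * (G : Matrix (Fin τ) (Fin τ) Fq)).mulVecLin
        rw [Matrix.mulVecLin_mul]
        refine hXinj.comp ?_
        intro v w hvw
        have h2 := congrArg
          (fun u => Matrix.mulVec ((G⁻¹ : GL (Fin τ) Fq) : Matrix (Fin τ) (Fin τ) Fq) u) hvw
        have hGinv : ((G⁻¹ : GL (Fin τ) Fq) : Matrix (Fin τ) (Fin τ) Fq)
            * (G : Matrix (Fin τ) (Fin τ) Fq) = 1 := by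
          rw [← Units.val_mul, inv_mul_cancel, Units.val_one]
        simpa only [Matrix.mulVecLin_apply, Matrix.mulVec_mulVec, hGinv,
          Matrix.one_mulVec] using h2
      · show (X * (G : Matrix (Fin τ) (Fin τ) Fq))
            * (((G⁻¹ : GL (Fin τ) Fq) : Matrix (Fin τ) (Fin τ) Fq) * Y) = M
        have hGinv2 : (G : Matrix (Fin τ) (Fin τ) Fq)
            * ((G⁻¹ : GL (Fin τ) Fq) : Matrix (Fin τ) (Fin τ) Fq) = 1 := by
          rw [← Units.val_mul, mul_inv_cancel, Units.val_one]
        rw [← Matrix.mul_assoc, Matrix.mul_assoc X _ _, hGinv2, Matrix.mul_one, hXY]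
    have hinj : Set.InjOn g ↑(Finset.univ : Finset (GL (Fin τ) Fq)) := by
      intro G _ G' _ hGG'
      have h1 : X * (G : Matrix (Fin τ) (Fin τ) Fq) = X * (G' : Matrix (Fin τ) (Fin τ) Fq) :=
        congrArg Prod.fst hGG'
      exact Units.ext (mul_left_cancel_of_inj X hXinj h1)
    have hc := Finset.card_le_card_of_injOn g (fun G _ => hmap G) hinj
    simpa [Nat.card_eq_fintype_card] using hc
  have hbelow : ∀ p ∈ t, (s.bipartiteBelow (fun M p => p.1 * p.2 = M) p).card ≤ 1 := by
    intro p hp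
    refine Finset.card_le_one.mpr ?_
    intro a ha b hb
    rw [Finset.mem_bipartiteBelow] at ha hb
    rw [← ha.2, ← hb.2]
  have key : s.card * Nat.card (GL (Fin τ) Fq) ≤ t.card * 1 :=
    Finset.card_mul_le_card_mul (fun M p => p.1 * p.2 = M) habove hbelow
  have hst : s.card * Nat.card (GL (Fin τ) Fq)
      ≤ Fintype.card Fq ^ (τ * m) * Fintype.card Fq ^ (τ * n) := by
    refine key.trans ?_
    rw [mul_one]
    calc t.card ≤ Fintype.card (Matrix (Fin m) (Fin τ) Fq × Matrix (Fin τ) (Fin n) Fq) := by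
          rw [← Finset.card_univ]; exact Finset.card_le_card (Finset.filter_subset _ _)
      _ = Fintype.card Fq ^ (τ * m) * Fintype.card Fq ^ (τ * n) := by
          rw [Fintype.card_prod,
            ← Fintype.card_congr (Matrix.of : (Fin m → Fin τ → Fq) ≃ _),
            ← Fintype.card_congr (Matrix.of : (Fin τ → Fin n → Fq) ≃ _),
            Fintype.card_fun, Fintype.card_fun, Fintype.card_fun, Fintype.card_fun]
          simp [← pow_mul, mul_comm]
  have hcardeq : Nat.card {M : Matrix (Fin m) (Fin n) Fq // M.rank ≤ τ} = s.card := by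
    rw [Nat.card_eq_fintype_card, hs, Fintype.card_subtype]
  rw [hcardeq, ← Matrix.card_GL_field]
  exact hst


lemma log_one_sub_bound {x : ℝ} (hx0 : 0 < x) (hx2 : x ≤ 1/2) :
    -Real.log (1 - x) ≤ 2 * x := by
  have h1x : (0:ℝ) < 1 - x := by linarith
  rw [← Real.log_inv]
  have h2 := Real.log_le_sub_one_of_pos (inv_pos.mpr h1x)
  have hinv : (1 - x)⁻¹ * (1 - x) = 1 := inv_mul_cancel₀ (ne_of_gt h1x)
  nlinarith [h2, hinv, inv_pos.mpr h1x, sq_nonneg x]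

set_option maxHeartbeats 800000 in
lemma Kq_facts {q : ℝ} (hq : 2 ≤ q) (τ : ℕ) :
    0 < (∏' j : ℕ, (1 - q⁻¹ ^ (j + 1))) ∧
    (∏' j : ℕ, (1 - q⁻¹ ^ (j + 1))) < ∏ j ∈ Finset.range τ, (1 - q⁻¹ ^ (j + 1)) := by
  have hq0 : (0:ℝ) < q := by linarith
  have hr0 : 0 < q⁻¹ := inv_pos.mpr hq0
  have hr2 : q⁻¹ ≤ 1/2 := by
    rw [inv_le_comm₀ hq0 (by norm_num)]
    linarith
  have hx0 : ∀ j : ℕ, 0 < q⁻¹ ^ (j + 1) := fun j => pow_pos hr0 _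
  have hx2 : ∀ j : ℕ, q⁻¹ ^ (j + 1) ≤ 1/2 := by
    intro j
    calc q⁻¹ ^ (j + 1) ≤ q⁻¹ ^ 1 :=
          pow_le_pow_of_le_one hr0.le (by linarith) (by omega)
      _ ≤ 1/2 := by simpa using hr2
  have hfpos : ∀ j : ℕ, 0 < 1 - q⁻¹ ^ (j + 1) := fun j => by have := hx2 j; linarith
  have hflt1 : ∀ j : ℕ, 1 - q⁻¹ ^ (j + 1) < 1 := fun j => by have := hx0 j; linarith
  have hlognp : ∀ j : ℕ, Real.log (1 - q⁻¹ ^ (j + 1)) ≤ 0 :=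
    fun j => Real.log_nonpos (hfpos j).le (hflt1 j).le
  have hgeom : Summable (fun j : ℕ => 2 * q⁻¹ ^ (j + 1)) := by
    have h := (summable_geometric_of_lt_one hr0.le (by linarith : q⁻¹ < 1)).mul_left (2 * q⁻¹)
    refine h.congr fun j => ?_
    ring
  have hsumlog : Summable (fun j : ℕ => Real.log (1 - q⁻¹ ^ (j + 1))) := by
    have hneg : Summable (fun j : ℕ => -Real.log (1 - q⁻¹ ^ (j + 1))) := by
      refine Summable.of_nonneg_of_le (fun j => by simpa using hlognp j)
        (fun j => log_one_sub_bound (hx0 j) (hx2 j)) hgeom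
    simpa using hneg.neg
  have hprod : HasProd (fun j : ℕ => 1 - q⁻¹ ^ (j + 1))
      (Real.exp (∑' j : ℕ, Real.log (1 - q⁻¹ ^ (j + 1)))) := by
    apply (hsumlog.hasSum.rexp).congr
    intro _
    congr
    exact funext fun j => Real.exp_log (hfpos j)
  have hK : (∏' j : ℕ, (1 - q⁻¹ ^ (j + 1)))
      = Real.exp (∑' j : ℕ, Real.log (1 - q⁻¹ ^ (j + 1))) := hprod.tprod_eq
  have hfin : ∏ j ∈ Finset.range τ, (1 - q⁻¹ ^ (j + 1))
      = Real.exp (∑ j ∈ Finset.range τ, Real.log (1 - q⁻¹ ^ (j + 1))) := by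
    rw [Real.exp_sum]
    exact (Finset.prod_congr rfl fun j _ => (Real.exp_log (hfpos j)).symm)
  have htail : Summable (fun i : ℕ => Real.log (1 - q⁻¹ ^ ((i + τ) + 1))) := by
    exact (summable_nat_add_iff τ).mpr hsumlog
  have htailneg : (∑' i : ℕ, Real.log (1 - q⁻¹ ^ ((i + τ) + 1))) < 0 := by
    have h0 := Summable.le_tsum htail.neg 0 (fun j _ => by simpa using hlognp ((j + τ)))
    rw [tsum_neg] at h0
    have hlt : Real.log (1 - q⁻¹ ^ ((0 + τ) + 1)) < 0 :=
      Real.log_neg (hfpos _) (hflt1 _)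
    linarith
  have hsplit := Summable.sum_add_tsum_nat_add τ hsumlog
  constructor
  · rw [hK]; exact Real.exp_pos _
  · rw [hK, hfin]
    apply Real.exp_lt_exp.mpr
    linarith


/-- For `0 ≤ τ ≤ min{n,m}`, the ball of rank radius `τ` in `F_{q^m}^n` satisfies
`q^{τ(m+n−τ)} ≤ |B_τ| < K_q⁻¹ · q^{τ(m+n−τ)}` where `K_q = Π_{j=1}^{∞} (1 − q^{-j})`. -/
theorem rank_metric_ball_size_bounds (Fq F : Type*) [Field Fq] [Fintype Fq]
    [Field F] [Fintype F] [Algebra Fq F]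
    (m n τ : ℕ) (hτ : τ ≤ min n m) (β : Module.Basis (Fin m) Fq F) (a : Fin n → F) :
    let q : ℝ := (Fintype.card Fq : ℝ)
    let Kq : ℝ := ∏' j : ℕ, (1 - q⁻¹ ^ (j + 1))
    let B : ℕ := Nat.card {b : Fin n → F // rankq Fq F β (b - a) ≤ τ}
    q ^ (τ * (m + n - τ)) ≤ (B : ℝ) ∧ (B : ℝ) < Kq⁻¹ * q ^ (τ * (m + n - τ)) := by
  intro q Kq B
  have hqdef : q = (Fintype.card Fq : ℝ) := rfl
  have hKdef : Kq = ∏' j : ℕ, (1 - ((Fintype.card Fq : ℝ))⁻¹ ^ (j + 1)) := rfl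
  rw [hqdef, hKdef]
  set Q : ℝ := (Fintype.card Fq : ℝ) with hQ
  have hτn : τ ≤ n := hτ.trans (min_le_left _ _)
  have hτm : τ ≤ m := hτ.trans (min_le_right _ _)
  have hcard2 : 2 ≤ Fintype.card Fq := Fintype.one_lt_card
  have hq2 : (2:ℝ) ≤ Q := by rw [hQ]; exact_mod_cast hcard2
  have hq0 : (0:ℝ) < Q := by linarith
  have hBval : B = Nat.card {M : Matrix (Fin m) (Fin n) Fq // M.rank ≤ τ} :=
    ball_card_eq β a
  -- lower bound
  have hlowN := lower_card (Fq := Fq) (m := m) hτn hτm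
  have hlower : Q ^ (τ * (m + n - τ)) ≤ (B : ℝ) := by
    rw [hBval, hQ]
    exact_mod_cast hlowN
  refine ⟨hlower, ?_⟩
  -- upper bound
  have huppN := upper_card (Fq := Fq) (n := n) hτm
  rw [← hBval] at huppN
  have hcast : ((∏ i : Fin τ, (Fintype.card Fq ^ τ - Fintype.card Fq ^ (i : ℕ)) : ℕ) : ℝ)
      = ∏ i : Fin τ, (Q ^ τ - Q ^ (i : ℕ)) := by
    rw [Nat.cast_prod]
    refine Finset.prod_congr rfl fun i _ => ?_
    have hle : Fintype.card Fq ^ (i : ℕ) ≤ Fintype.card Fq ^ τ :=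
      pow_le_pow_right₀ (by omega : 1 ≤ Fintype.card Fq) (le_of_lt i.isLt)
    rw [Nat.cast_sub hle]
    push_cast [hQ]
    ring
  have hupp : (B : ℝ) * ∏ i : Fin τ, (Q ^ τ - Q ^ (i : ℕ)) ≤ Q ^ (τ * m) * Q ^ (τ * n) := by
    rw [← hcast, hQ]
    exact_mod_cast huppN
  have hqne : Q ≠ 0 := ne_of_gt hq0
  have hfactor : ∀ i ∈ Finset.range τ, Q ^ τ - Q ^ i = Q ^ τ * (1 - Q⁻¹ ^ (τ - i)) := by
    intro i hi
    have hi' : i < τ := Finset.mem_range.mp hi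
    have hpow : Q ^ i * Q ^ (τ - i) = Q ^ τ := by
      rw [← pow_add]
      congr 1
      omega
    have hne : Q ^ (τ - i) ≠ 0 := pow_ne_zero _ hqne
    rw [← hpow, inv_pow, mul_sub, mul_one, mul_assoc, mul_inv_cancel₀ hne, mul_one]
  have hprodeq : ∏ i : Fin τ, (Q ^ τ - Q ^ (i : ℕ))
      = Q ^ (τ * τ) * ∏ j ∈ Finset.range τ, (1 - Q⁻¹ ^ (j + 1)) := by
    rw [Fin.prod_univ_eq_prod_range (fun i => Q ^ τ - Q ^ i) τ,
      Finset.prod_congr rfl hfactor, Finset.prod_mul_distrib, Finset.prod_const,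
      Finset.card_range, ← pow_mul]
    congr 1
    rw [← Finset.prod_range_reflect (fun j => 1 - Q⁻¹ ^ (j + 1)) τ]
    refine Finset.prod_congr rfl fun i hi => ?_
    have hi' : i < τ := Finset.mem_range.mp hi
    congr 2
    omega
  obtain ⟨hK0, hKlt⟩ := Kq_facts hq2 τ
  have hB0 : (0:ℝ) < (B : ℝ) := lt_of_lt_of_le (by positivity) hlower
  have hchain : (B : ℝ) * (∏' j : ℕ, (1 - Q⁻¹ ^ (j + 1))) * Q ^ (τ * τ)
      < Q ^ (τ * m) * Q ^ (τ * n) := by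
    have h1 : (B : ℝ) * (∏' j : ℕ, (1 - Q⁻¹ ^ (j + 1))) * Q ^ (τ * τ)
        < (B : ℝ) * (∏ j ∈ Finset.range τ, (1 - Q⁻¹ ^ (j + 1))) * Q ^ (τ * τ) := by
      have h2 := mul_lt_mul_of_pos_left hKlt hB0
      have hp : (0:ℝ) < Q ^ (τ * τ) := by positivity
      exact mul_lt_mul_of_pos_right h2 hp
    calc (B : ℝ) * (∏' j : ℕ, (1 - Q⁻¹ ^ (j + 1))) * Q ^ (τ * τ)
        < (B : ℝ) * (∏ j ∈ Finset.range τ, (1 - Q⁻¹ ^ (j + 1))) * Q ^ (τ * τ) := h1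
      _ = (B : ℝ) * ∏ i : Fin τ, (Q ^ τ - Q ^ (i : ℕ)) := by rw [hprodeq]; ring
      _ ≤ Q ^ (τ * m) * Q ^ (τ * n) := hupp
  have hexp : Q ^ (τ * m) * Q ^ (τ * n) = Q ^ (τ * (m + n - τ)) * Q ^ (τ * τ) := by
    rw [← pow_add, ← pow_add]
    congr 1
    have h3 : m + n - τ + τ = m + n := by omega
    calc τ * m + τ * n = τ * (m + n) := by ring
      _ = τ * (m + n - τ + τ) := by rw [h3]
      _ = τ * (m + n - τ) + τ * τ := by ring
  rw [hexp] at hchain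
  have hfinal : (B : ℝ) * (∏' j : ℕ, (1 - Q⁻¹ ^ (j + 1))) < Q ^ (τ * (m + n - τ)) := by
    have hp : (0:ℝ) < Q ^ (τ * τ) := by positivity
    exact lt_of_mul_lt_mul_right hchain hp.le
  rw [inv_mul_eq_div, lt_div_iff₀ hK0]
  exact hfinal
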